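/- Let A be an infeasible linear pencil (S_A = ∅). Then A is weakly infeasible (infeasible but not strongly infeasible) if and only if for every ε > 0 the perturbed pencil A + ε·I_α is feasible, i.e., there exists x ∈ ℝ^n with A(x) + ε I_α ⪰ 0. -/

import Mathlib

open MvPolynomial Matrix
attribute [local instance] Matrix.frobeniusNormedAddCommGroup
attribute [local instance] Matrix.frobeniusNormedSpace

noncomputable section

abbrev RP (n : ℕ) := MvPolynomial (Fin n) ℝ

/-- Evaluation of the linear pencil `A₀ + ∑ xᵢ Aᵢ` at a point `x ∈ ℝⁿ`. -/
def pencilEval {n α : ℕ} (A0 : Matrix (Fin α) (Fin α) ℝ) (A : Fin n → Matrix (Fin α) (Fin α) ℝ)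
    (x : Fin n → ℝ) : Matrix (Fin α) (Fin α) ℝ :=
  A0 + ∑ i, x i • A i

/-- The linear pencil `A₀ + ∑ xᵢ Aᵢ` as a matrix of polynomials. -/
def pencilPoly {n α : ℕ} (A0 : Matrix (Fin α) (Fin α) ℝ) (A : Fin n → Matrix (Fin α) (Fin α) ℝ) :
    Matrix (Fin α) (Fin α) (RP n) :=
  A0.map C + ∑ i, (X i : RP n) • (A i).map C

/-- `v^* M v` for a matrix of polynomials. -/
def quadForm {n α : ℕ} (M : Matrix (Fin α) (Fin α) (RP n)) (v : Fin α → RP n) : RP n :=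
  v ⬝ᵥ (M *ᵥ v)

/-- A sum of squares of polynomials. -/
def IsSos {n : ℕ} (p : RP n) : Prop := ∃ (k : ℕ) (q : Fin k → RP n), p = ∑ i, q i ^ 2

/-- An sos-matrix: a finite sum `∑ vⱼ vⱼ^*` with `vⱼ` vectors of polynomials. -/
def IsSosMatrix {n α : ℕ} (S : Matrix (Fin α) (Fin α) (RP n)) : Prop :=
  ∃ (k : ℕ) (v : Fin k → Fin α → RP n), S = ∑ j, Matrix.vecMulVec (v j) (v j)

/-- Membership in the quadratic module `M_A` associated to the pencil. -/
def InQuadModule {n α : ℕ} (A0 : Matrix (Fin α) (Fin α) ℝ)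
    (A : Fin n → Matrix (Fin α) (Fin α) ℝ) (p : RP n) : Prop :=
  ∃ s, IsSos s ∧ ∃ (k : ℕ) (v : Fin k → Fin α → RP n),
    p = s + ∑ j, quadForm (pencilPoly A0 A) (v j)

/-- Strong infeasibility: positive distance (Frobenius norm) between the range of the
pencil and the PSD cone. -/
def StronglyInfeasible {n α : ℕ} (A0 : Matrix (Fin α) (Fin α) ℝ)
    (A : Fin n → Matrix (Fin α) (Fin α) ℝ) : Prop :=
  ∃ ε > (0:ℝ), ∀ (x : Fin n → ℝ) (B : Matrix (Fin α) (Fin α) ℝ), B.PosSemidef →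
    ε ≤ dist (pencilEval A0 A x) B

lemma aux_cs {α : ℕ} (E : Matrix (Fin α) (Fin α) ℝ) (v : Fin α → ℝ) :
    |v ⬝ᵥ (E *ᵥ v)| ≤ ‖E‖ * (v ⬝ᵥ v) := by
  have hS : v ⬝ᵥ v = ∑ j, v j ^ 2 := by simp [dotProduct, sq]
  set S : ℝ := ∑ j, v j ^ 2 with hSdef
  have hS0 : 0 ≤ S := Finset.sum_nonneg fun _ _ => sq_nonneg _
  have hnorm : ‖E‖ ^ 2 = ∑ i, ∑ j, (E i j) ^ 2 := by
    have h : ‖E‖ = Real.sqrt (∑ i, ∑ j, (E i j) ^ 2) := by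
      rw [Matrix.frobenius_norm_def, Real.sqrt_eq_rpow]
      congr 1
      simp [Real.rpow_two, Real.norm_eq_abs, sq_abs]
    rw [h, Real.sq_sqrt]; positivity
  have step2 : ∀ i, ((E *ᵥ v) i) ^ 2 ≤ (∑ j, (E i j) ^ 2) * S := fun i => by
    simpa [Matrix.mulVec, dotProduct] using
      Finset.sum_mul_sq_le_sq_mul_sq Finset.univ (fun j => E i j) v
  have step1 : (v ⬝ᵥ (E *ᵥ v)) ^ 2 ≤ S * ∑ i, ((E *ᵥ v) i) ^ 2 := by
    simpa [dotProduct] using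
      Finset.sum_mul_sq_le_sq_mul_sq Finset.univ v (fun i => (E *ᵥ v) i)
  have step3 : S * ∑ i, ((E *ᵥ v) i) ^ 2 ≤ S * ((∑ i, ∑ j, (E i j) ^ 2) * S) := by
    apply mul_le_mul_of_nonneg_left _ hS0
    calc ∑ i, ((E *ᵥ v) i) ^ 2 ≤ ∑ i, (∑ j, (E i j) ^ 2) * S :=
          Finset.sum_le_sum fun i _ => step2 i
      _ = (∑ i, ∑ j, (E i j) ^ 2) * S := by rw [Finset.sum_mul]
  have hsq : (v ⬝ᵥ (E *ᵥ v)) ^ 2 ≤ (‖E‖ * (v ⬝ᵥ v)) ^ 2 := by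
    rw [hS, mul_pow, hnorm]
    calc (v ⬝ᵥ (E *ᵥ v)) ^ 2 ≤ S * ((∑ i, ∑ j, (E i j) ^ 2) * S) := le_trans step1 step3
      _ = (∑ i, ∑ j, (E i j) ^ 2) * S ^ 2 := by ring
  exact abs_le.mpr (abs_le_of_sq_le_sq' hsq (mul_nonneg (norm_nonneg _) (hS ▸ hS0)))

lemma aux_symm {n α : ℕ} (A0 : Matrix (Fin α) (Fin α) ℝ)
    (A : Fin n → Matrix (Fin α) (Fin α) ℝ) (hA0 : A0.IsSymm) (hA : ∀ i, (A i).IsSymm)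
    (x : Fin n → ℝ) : (pencilEval A0 A x).IsHermitian := by
  have hs : (pencilEval A0 A x).IsSymm := by
    unfold pencilEval
    rw [Matrix.IsSymm, Matrix.transpose_add, Matrix.transpose_sum, hA0]
    congr 1
    exact Finset.sum_congr rfl fun i _ => by rw [Matrix.transpose_smul, hA i]
  rw [Matrix.IsHermitian, conjTranspose]
  ext i j
  simpa using hs.apply i j

/-- An infeasible pencil is weakly infeasible iff `A + ε I` is feasible for every `ε > 0`. -/
theorem stmt_1 {n α : ℕ} (A0 : Matrix (Fin α) (Fin α) ℝ)
    (A : Fin n → Matrix (Fin α) (Fin α) ℝ) (hA0 : A0.IsSymm) (hA : ∀ i, (A i).IsSymm)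
    (hinf : ∀ x : Fin n → ℝ, ¬ (pencilEval A0 A x).PosSemidef) :
    ¬ StronglyInfeasible A0 A ↔
      ∀ ε > (0:ℝ), ∃ x : Fin n → ℝ, (pencilEval A0 A x + ε • (1 : Matrix (Fin α) (Fin α) ℝ)).PosSemidef := by
  constructor
  · intro hns ε hε
    rw [StronglyInfeasible] at hns
    push_neg at hns
    obtain ⟨x, B, hB, hd⟩ := hns ε hε
    refine ⟨x, Matrix.posSemidef_iff_dotProduct_mulVec.mpr ⟨?_, ?_⟩⟩
    · refine Matrix.IsHermitian.add (aux_symm A0 A hA0 hA x) ?_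
      rw [Matrix.IsHermitian]
      simp
    · intro v
      set P := pencilEval A0 A x with hP
      set E := P - B with hE
      have hEnorm : ‖E‖ < ε := by
        rw [hE, ← dist_eq_norm]; exact hd
      have h1 : (P + ε • (1 : Matrix (Fin α) (Fin α) ℝ)) *ᵥ v
          = B *ᵥ v + E *ᵥ v + ε • v := by
        rw [hE]
        simp [Matrix.add_mulVec, Matrix.sub_mulVec, Matrix.smul_mulVec]
      have hsv : star v = v := by simp
      rw [hsv, h1, dotProduct_add, dotProduct_add, dotProduct_smul]
      have hB' : 0 ≤ v ⬝ᵥ (B *ᵥ v) := by simpa [hsv] using (Matrix.posSemidef_iff_dotProduct_mulVec.mp hB).2 v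
      have hEv : -(‖E‖ * (v ⬝ᵥ v)) ≤ v ⬝ᵥ (E *ᵥ v) :=
        (neg_le_neg (aux_cs E v)).trans (neg_abs_le _)
      have hvv : 0 ≤ v ⬝ᵥ v := Finset.sum_nonneg fun i _ => mul_self_nonneg _
      have hε' : ‖E‖ * (v ⬝ᵥ v) ≤ ε * (v ⬝ᵥ v) :=
        mul_le_mul_of_nonneg_right hEnorm.le hvv
      simp only [smul_eq_mul]
      nlinarith
  · intro h hstrong
    obtain ⟨ε0, hε0, hB⟩ := hstrong
    set c := ‖(1 : Matrix (Fin α) (Fin α) ℝ)‖ with hc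
    have hc0 : 0 ≤ c := norm_nonneg _
    set δ := ε0 / (2 * (c + 1)) with hδ
    have hδ0 : 0 < δ := by positivity
    obtain ⟨x, hx⟩ := h δ hδ0
    have := hB x (pencilEval A0 A x + δ • 1) hx
    have hdist : dist (pencilEval A0 A x) (pencilEval A0 A x + δ • 1) = δ * c := by
      rw [dist_eq_norm]
      have : pencilEval A0 A x - (pencilEval A0 A x + δ • 1) = (-δ) • (1 : Matrix (Fin α) (Fin α) ℝ) := by
        rw [neg_smul]; abel
      rw [this, norm_smul, norm_neg, Real.norm_eq_abs, abs_of_pos hδ0]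
    rw [hdist] at this
    have hlt : δ * c < ε0 := by
      rw [hδ]
      rw [div_mul_eq_mul_div, div_lt_iff₀ (by positivity)]
      nlinarith
    linarith
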